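/- If A is a set of positive integers with upper Banach density δ(A) = 1, then for every integer h ≥ 2 there exist pairwise disjoint subsets B_1, …, B_h of A such that δ(B_i) = 1 for all i = 1, …, h and B_1 + B_2 + ⋯ + B_h ⊆ A. -/

import Mathlib

open Filter Set

/-- `bF A n = max_{u ∈ ℕ₀} |A ∩ [u, u+n-1]|`. -/
noncomputable def bF (A : Set ℕ) (n : ℕ) : ℕ :=
  ⨆ u : ℕ, (A ∩ Set.Icc u (u + n - 1)).ncard

/-- Upper Banach density `δ(A) = limsup_{n→∞} bF A n / n`. -/
noncomputable def ubd (A : Set ℕ) : ℝ :=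
  Filter.limsup (fun n : ℕ => (bF A n : ℝ) / n) Filter.atTop

/-- The sumset `∑_{i ∈ I} B i = { ∑_{i∈I} a i : a i ∈ B i for each i ∈ I }`. -/
def sumset (B : ℕ → Set ℕ) (I : Finset ℕ) : Set ℕ :=
  {s : ℕ | ∃ a : ℕ → ℕ, (∀ i ∈ I, a i ∈ B i) ∧ s = ∑ i ∈ I, a i}

lemma ncard_Icc' (a b : ℕ) : (Set.Icc a b).ncard = b + 1 - a := by
  rw [Set.ncard_eq_toFinset_card', Set.toFinset_Icc, Nat.card_Icc]

lemma ncard_inter_Icc_le (A : Set ℕ) (u v : ℕ) : (A ∩ Set.Icc u v).ncard ≤ v + 1 - u := by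
  calc (A ∩ Set.Icc u v).ncard ≤ (Set.Icc u v).ncard :=
        Set.ncard_le_ncard inter_subset_right (Set.finite_Icc u v)
    _ = v + 1 - u := ncard_Icc' u v

lemma bddAbove_bF (A : Set ℕ) (n : ℕ) :
    BddAbove (Set.range fun u => (A ∩ Set.Icc u (u + n - 1)).ncard) := by
  refine ⟨n + 1, ?_⟩
  rintro x ⟨u, rfl⟩
  calc (A ∩ Set.Icc u (u + n - 1)).ncard ≤ u + n - 1 + 1 - u := ncard_inter_Icc_le _ _ _
    _ ≤ n + 1 := by omega

lemma bF_le' (A : Set ℕ) (n : ℕ) (hn : 1 ≤ n) : bF A n ≤ n := by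
  refine ciSup_le fun u => ?_
  calc (A ∩ Set.Icc u (u + n - 1)).ncard ≤ u + n - 1 + 1 - u := ncard_inter_Icc_le _ _ _
    _ ≤ n := by omega

lemma le_bF (A : Set ℕ) (n u : ℕ) : (A ∩ Set.Icc u (u + n - 1)).ncard ≤ bF A n :=
  le_ciSup (bddAbove_bF A n) u

lemma ubd_eq_one (B : Set ℕ) (hB : ∀ m, ∃ u, Set.Icc u (u + m) ⊆ B) : ubd B = 1 := by
  have hbF : ∀ n, 1 ≤ n → bF B n = n := by
    intro n hn
    refine le_antisymm (bF_le' B n hn) ?_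
    obtain ⟨u, hu⟩ := hB (n - 1)
    have hu' : Set.Icc u (u + n - 1) ⊆ B := by
      intro x hx; exact hu (by simp only [Set.mem_Icc] at hx ⊢; omega)
    calc n = (Set.Icc u (u + n - 1)).ncard := by rw [ncard_Icc']; omega
      _ = (B ∩ Set.Icc u (u + n - 1)).ncard := by
          rw [Set.inter_eq_self_of_subset_right hu']
      _ ≤ bF B n := le_bF B n u
  have hev : ∀ᶠ n : ℕ in atTop, (bF B n : ℝ) / n = 1 := by
    filter_upwards [eventually_ge_atTop 1] with n hn
    rw [hbF n hn]
    have : (n : ℝ) ≠ 0 := by positivity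
    field_simp
  rw [ubd, Filter.limsup_congr hev, Filter.limsup_const]

lemma exists_interval (A : Set ℕ) (hA : ubd A = 1) (m : ℕ) : ∃ u, Set.Icc u (u + m) ⊆ A := by
  by_contra hcon
  push_neg at hcon
  have hmiss : ∀ u, (A ∩ Set.Icc u (u + m)).ncard ≤ m := by
    intro u
    obtain ⟨x, hx, hxA⟩ := Set.not_subset.mp (hcon u)
    have hss : A ∩ Set.Icc u (u + m) ⊂ Set.Icc u (u + m) := by
      refine ⟨inter_subset_right, fun hsub => hxA (hsub hx).1⟩
    have := Set.ncard_lt_ncard hss (Set.finite_Icc _ _)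
    rw [ncard_Icc'] at this; omega
  set M := m + 1 with hM
  have key : ∀ q u, (A ∩ Set.Icc u (u + (q * M + m))).ncard ≤ (q + 1) * m := by
    intro q
    induction q with
    | zero => intro u; simpa using hmiss u
    | succ q ih =>
      intro u
      have hsplit : Set.Icc u (u + ((q + 1) * M + m)) ⊆
          Set.Icc u (u + m) ∪ Set.Icc (u + M) ((u + M) + (q * M + m)) := by
        intro x hx
        simp only [Set.mem_Icc, Set.mem_union] at hx ⊢
        have e1 : (q + 1) * M = q * M + M := by ring
        omega
      calc (A ∩ Set.Icc u (u + ((q + 1) * M + m))).ncard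
          ≤ ((A ∩ Set.Icc u (u + m)) ∪ (A ∩ Set.Icc (u + M) ((u + M) + (q * M + m)))).ncard := by
            refine Set.ncard_le_ncard ?_ ?_
            · rw [← Set.inter_union_distrib_left]
              exact Set.inter_subset_inter_right _ hsplit
            · exact (((Set.finite_Icc _ _).inter_of_right _).union
                (((Set.finite_Icc _ _)).inter_of_right _))
        _ ≤ (A ∩ Set.Icc u (u + m)).ncard
              + (A ∩ Set.Icc (u + M) ((u + M) + (q * M + m))).ncard := Set.ncard_union_le _ _
        _ ≤ (q + 1 + 1) * m := by
            have h1 := ih (u + M); have h2 := hmiss u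
            have : (q + 1 + 1) * m = m + (q + 1) * m := by ring
            omega
  have hbF : ∀ n : ℕ, bF A n ≤ (n / M + 1) * m := by
    intro n
    refine ciSup_le fun u => ?_
    refine le_trans (Set.ncard_le_ncard (Set.inter_subset_inter_right _
      (Set.Icc_subset_Icc le_rfl ?_)) ((Set.finite_Icc _ _).inter_of_right _)) (key (n / M) u)
    have h1 : n % M < M := Nat.mod_lt n (by omega)
    have h2 := Nat.div_add_mod n M
    have h3 : M * (n / M) = (n / M) * M := Nat.mul_comm _ _
    omega
  have hev : ∀ᶠ n : ℕ in atTop, (bF A n : ℝ) / n ≤ (m : ℝ) / M + m / n := by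
    filter_upwards [eventually_ge_atTop 1] with n hn
    have h1 : (bF A n : ℝ) ≤ ((n / M : ℕ) + 1) * m := by exact_mod_cast hbF n
    have h2 : ((n / M : ℕ) : ℝ) ≤ (n : ℝ) / M := Nat.cast_div_le
    have hn0 : (0 : ℝ) < n := by exact_mod_cast hn
    have hM0 : (0 : ℝ) < M := by positivity
    rw [div_le_iff₀ hn0]
    have h3 : ((n / M : ℕ) + 1 : ℝ) * m ≤ ((n : ℝ) / M + 1) * m := by
      have : (0:ℝ) ≤ m := by positivity
      nlinarith
    have h4 : ((n : ℝ) / M + 1) * m = ((m : ℝ) / M + m / n) * n := by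
      field_simp
    linarith
  have htend : Tendsto (fun n : ℕ => (m : ℝ) / M + m / n) atTop (nhds ((m : ℝ) / M + 0)) :=
    tendsto_const_nhds.add (tendsto_const_div_atTop_nhds_zero_nat (m:ℝ))
  rw [add_zero] at htend
  have hles : ubd A ≤ (m : ℝ) / M := by
    rw [ubd]
    refine le_trans (Filter.limsup_le_limsup hev ?_ ?_) ?_
    · refine Filter.isCoboundedUnder_le_of_le atTop (x := 0) fun n => by positivity
    · exact htend.isBoundedUnder_le
    · exact htend.limsup_eq.le
  rw [hA] at hles
  have hlt : (m : ℝ) / M < 1 := by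
    rw [div_lt_one (by positivity)]
    exact_mod_cast Nat.lt_succ_self m
  linarith


lemma exists_interval' (A : Set ℕ) (hA : ubd A = 1) (m b : ℕ) :
    ∃ u, b ≤ u ∧ Set.Icc u (u + m) ⊆ A := by
  obtain ⟨u, hu⟩ := exists_interval A hA (m + b)
  refine ⟨max u b, le_max_right _ _, fun x hx => hu ?_⟩
  simp only [Set.mem_Icc] at hx ⊢
  have h1 : u ≤ max u b := le_max_left u b
  have h2 : max u b ≤ u + b := max_le (Nat.le_add_right _ _) (Nat.le_add_left _ _)
  omega

def stageAux (h : ℕ) (pick : ℕ → ℕ → ℕ) : ℕ → ℕ × ℕ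
  | 0 => (pick (0 + h * 1) 1, pick (0 + h * 1) 1 + (0 + h * 1) + 1)
  | k + 1 =>
    (pick (k + 1 + h * (stageAux h pick k).2) (stageAux h pick k).2,
     pick (k + 1 + h * (stageAux h pick k).2) (stageAux h pick k).2
       + (k + 1 + h * (stageAux h pick k).2) + 1)

def prevB (h : ℕ) (pick : ℕ → ℕ → ℕ) : ℕ → ℕ
  | 0 => 1
  | k + 1 => (stageAux h pick k).2

lemma stage_eq (h : ℕ) (pick : ℕ → ℕ → ℕ) (k : ℕ) :
    stageAux h pick k =
      (pick (k + h * prevB h pick k) (prevB h pick k),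
       pick (k + h * prevB h pick k) (prevB h pick k) + (k + h * prevB h pick k) + 1) := by
  cases k <;> rfl

lemma main_aux (A : Set ℕ) (h : ℕ) (hh : 2 ≤ h) (pick : ℕ → ℕ → ℕ)
    (hpick1 : ∀ m b, b ≤ pick m b)
    (hpick2 : ∀ m b, Set.Icc (pick m b) (pick m b + m) ⊆ A) :
    ∃ B : Fin h → Set ℕ,
      (∀ i, B i ⊆ A) ∧
      Pairwise (Function.onFun Disjoint B) ∧
      (∀ i, ∀ m, ∃ u, Set.Icc u (u + m) ⊆ B i) ∧
      {s : ℕ | ∃ a : Fin h → ℕ, (∀ i, a i ∈ B i) ∧ s = ∑ i, a i} ⊆ A := by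
  obtain ⟨v, P, hvge, hsub, hPsucc, hP0⟩ :
      ∃ (v P : ℕ → ℕ),
        (∀ k, P k ≤ v k) ∧
        (∀ k, Set.Icc (v k) (v k + (k + h * P k)) ⊆ A) ∧
        (∀ k, P (k + 1) = v k + (k + h * P k) + 1) ∧
        P 0 = 1 := by
    refine ⟨fun k => (stageAux h pick k).1, prevB h pick, fun k => ?_, fun k => ?_,
      fun k => ?_, rfl⟩
    · show prevB h pick k ≤ (stageAux h pick k).1
      rw [stage_eq]; exact hpick1 _ _
    · show Set.Icc (stageAux h pick k).1 ((stageAux h pick k).1 + (k + h * prevB h pick k)) ⊆ A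
      rw [stage_eq]; exact hpick2 _ _
    · show (stageAux h pick k).2 = (stageAux h pick k).1 + (k + h * prevB h pick k) + 1
      rw [stage_eq h pick k]
  have hPmono : Monotone P := by
    apply monotone_nat_of_le_succ
    intro k
    rw [hPsucc k]
    have := hvge k
    omega
  have hP1 : ∀ k, 1 ≤ P k := fun k => hP0 ▸ hPmono (Nat.zero_le k)
  have hbig : ∀ j k, j < k → v j + j < P k := by
    intro j k hjk
    have h1 : v j + j < P (j + 1) := by rw [hPsucc j]; omega
    exact lt_of_lt_of_le h1 (hPmono hjk)
  refine ⟨fun i => ⋃ k ∈ {k : ℕ | k % h = (i : ℕ)}, Set.Icc (v k) (v k + k), ?_, ?_, ?_, ?_⟩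
  · -- subset of A
    intro i x hx
    simp only [Set.mem_iUnion, Set.mem_setOf_eq, Set.mem_Icc] at hx
    obtain ⟨k, _, hx1, hx2⟩ := hx
    exact hsub k ⟨hx1, by omega⟩
  · -- pairwise disjoint
    intro i j hij
    rw [Function.onFun, Set.disjoint_left]
    intro x hxi hxj
    simp only [Set.mem_iUnion, Set.mem_setOf_eq, Set.mem_Icc] at hxi hxj
    obtain ⟨k, hk, hk1, hk2⟩ := hxi
    obtain ⟨k', hk', hk1', hk2'⟩ := hxj
    have hne : k ≠ k' := by
      intro hkk; apply hij; apply Fin.ext; rw [← hk, ← hk', hkk]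
    rcases lt_or_gt_of_ne hne with hlt | hlt
    · have := hbig k k' hlt
      have := hvge k'
      omega
    · have := hbig k' k hlt
      have := hvge k
      omega
  · -- intervals
    intro i m
    refine ⟨v ((i : ℕ) + m * h), ?_⟩
    intro x hx
    simp only [Set.mem_iUnion, Set.mem_setOf_eq, Set.mem_Icc] at hx ⊢
    refine ⟨(i : ℕ) + m * h, ?_, hx.1, ?_⟩
    · rw [Nat.add_mul_mod_self_right, Nat.mod_eq_of_lt i.isLt]
    · have hm : m ≤ m * h := Nat.le_mul_of_pos_right m (by omega)
      have := hx.2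
      omega
  · -- sumset
    rintro s ⟨a, ha, rfl⟩
    have ha' : ∀ i : Fin h, ∃ kk, kk % h = (i : ℕ) ∧ v kk ≤ a i ∧ a i ≤ v kk + kk := by
      intro i
      have := ha i
      simp only [Set.mem_iUnion, Set.mem_setOf_eq, Set.mem_Icc] at this
      obtain ⟨kk, h1, h2, h3⟩ := this
      exact ⟨kk, h1, h2, h3⟩
    choose k hk1 hk2 hk3 using ha'
    haveI : Nonempty (Fin h) := ⟨⟨0, by omega⟩⟩
    obtain ⟨imax, -, hmax⟩ := Finset.exists_max_image Finset.univ k Finset.univ_nonempty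
    have hbound : ∀ i : Fin h, i ≠ imax → a i < P (k imax) := by
      intro i hi
      have hkne : k i ≠ k imax := by
        intro hkk
        apply hi; apply Fin.ext
        rw [← hk1 i, ← hk1 imax, hkk]
      have hklt : k i < k imax := lt_of_le_of_ne (hmax i (Finset.mem_univ i)) hkne
      exact lt_of_le_of_lt (hk3 i) (hbig (k i) (k imax) hklt)
    have hsplit : ∑ i, a i = a imax + ∑ i ∈ Finset.univ.erase imax, a i :=
      (Finset.add_sum_erase Finset.univ a (Finset.mem_univ imax)).symm
    have hs2 : ∑ i ∈ Finset.univ.erase imax, a i ≤ (h - 1) * P (k imax) := by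
      have hcard : (Finset.univ.erase imax).card = h - 1 := by
        rw [Finset.card_erase_of_mem (Finset.mem_univ imax), Finset.card_univ, Fintype.card_fin]
      calc ∑ i ∈ Finset.univ.erase imax, a i
          ≤ ∑ _i ∈ Finset.univ.erase imax, P (k imax) := by
            refine Finset.sum_le_sum fun i hi => ?_
            exact le_of_lt (hbound i (Finset.ne_of_mem_erase hi))
        _ = (h - 1) * P (k imax) := by rw [Finset.sum_const, hcard, smul_eq_mul]
    have hmul : (h - 1) * P (k imax) + P (k imax) = h * P (k imax) := by
      have he : h - 1 + 1 = h := by omega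
      calc (h - 1) * P (k imax) + P (k imax) = (h - 1 + 1) * P (k imax) := by ring
        _ = h * P (k imax) := by rw [he]
    apply hsub (k imax)
    simp only [Set.mem_Icc]
    have hlow := hk2 imax
    have hhigh := hk3 imax
    have hPpos := hP1 (k imax)
    constructor
    · rw [hsplit]; omega
    · rw [hsplit]; omega

theorem finite_sumset_density_one (A : Set ℕ) (hApos : ∀ a ∈ A, 0 < a)
    (hA : ubd A = 1) (h : ℕ) (hh : 2 ≤ h) :
    ∃ B : Fin h → Set ℕ,
      (∀ i, B i ⊆ A) ∧
      Pairwise (Function.onFun Disjoint B) ∧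
      (∀ i, ubd (B i) = 1) ∧
      {s : ℕ | ∃ a : Fin h → ℕ, (∀ i, a i ∈ B i) ∧ s = ∑ i, a i} ⊆ A := by
  have hI : ∀ m b, ∃ u, b ≤ u ∧ Set.Icc u (u + m) ⊆ A := fun m b => exists_interval' A hA m b
  choose pick hpick1 hpick2 using hI
  obtain ⟨B, h1, h2, h3, h4⟩ := main_aux A h hh pick hpick1 hpick2
  exact ⟨B, h1, h2, fun i => ubd_eq_one (B i) (h3 i), h4⟩
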